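/- Let (Sh, Rec, 𝒴) be an (ε₁,ε₂)-leakage-resilient secret sharing scheme for b-bit messages using d bits of randomness, and let 𝒵 = {Sh(U_b, y) : y ∈ {0,1}^d}. Fix functions f, g: {0,1}^ℓ → {0,1}^b and h: {0,1}^{2b} → {0,1}^m, and suppose that h(f(Z₁), g(Z₂)) ≈_{δ'} U_m for every (Z₁,Z₂) ∈ 𝒵. Then the function ext defined by ext(y) = h(f(L_y), g(R_y)), where (L_y, R_y) = Sh(0^b, y), satisfies ext(Y) ≈_δ U_m for every Y ∈ 𝒴, with δ = 2^b·ε₂ + δ'. -/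

import Mathlib

open Finset
open scoped Classical

/-- Bit strings of length `n`. -/
abbrev BS (n : ℕ) : Type := Fin n → Bool

/-- `p` is a probability mass function on the finite type `S`. -/
def IsDist {S : Type*} [Fintype S] (p : S → ℝ) : Prop :=
  (∀ s, 0 ≤ p s) ∧ ∑ s, p s = 1

/-- Statistical distance between two distributions on `S`. -/
noncomputable def statDist {S : Type*} [Fintype S] (p q : S → ℝ) : ℝ :=
  (∑ s, |p s - q s|) / 2

/-- Pushforward of a distribution `p` on `S` along `f : S → T`. -/
noncomputable def push {S T : Type*} [Fintype S] [DecidableEq T] (f : S → T)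
    (p : S → ℝ) : T → ℝ :=
  fun t => ∑ s, if f s = t then p s else 0

/-- The uniform distribution on `{0,1}^m`. -/
noncomputable def unif (m : ℕ) : BS m → ℝ := fun _ => 1 / 2 ^ m

/-- `(Sh, Rec, 𝒴)` is an `(ε₁, ε₂)`-leakage-resilient secret sharing scheme
(a `(2,2,ε₁)`-secret sharing scheme with `ε₂`-leakage-resilience against one-bit local
leakage) for `b`-bit messages using `d` bits of randomness, with shares in `{0,1}^ℓ`. -/
def IsLRSS (b d ℓ : ℕ) (Sh : BS b → BS d → BS ℓ × BS ℓ)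
    (Rec : BS ℓ × BS ℓ → BS b) (𝒴 : Set (BS d → ℝ)) (ε₁ ε₂ : ℝ) : Prop :=
  (∀ Y ∈ 𝒴, IsDist Y) ∧
  -- correctness: with probability 1 over the randomness, both shares recover the secret
  (∀ Y ∈ 𝒴, ∀ x : BS b, ∀ y : BS d, 0 < Y y → Rec (Sh x y) = x) ∧
  -- secrecy: each single share (the only nontrivial unauthorized sets) hides the secret
  (∀ Y ∈ 𝒴, ∀ x x' : BS b,
    statDist (push (fun y => (Sh x y).1) Y) (push (fun y => (Sh x' y).1) Y) ≤ ε₁ ∧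
    statDist (push (fun y => (Sh x y).2) Y) (push (fun y => (Sh x' y).2) Y) ≤ ε₁) ∧
  -- leakage-resilience against one bit of local leakage from each share
  (∀ Y ∈ 𝒴, ∀ x x' : BS b, ∀ f g : BS ℓ → Bool,
    statDist (push (fun y => (f (Sh x y).1, g (Sh x y).2)) Y)
             (push (fun y => (f (Sh x' y).1, g (Sh x' y).2)) Y) ≤ ε₂)

/-- Concatenation of two `b`-bit strings into a `2b`-bit string. -/
def concat {b : ℕ} (u v : BS b) : BS (2 * b) :=
  fun i => Fin.append u v (Fin.cast (two_mul b) i)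

lemma push_sum {S T : Type*} [Fintype S] [Fintype T] [DecidableEq T] (f : S → T) (p : S → ℝ) :
    ∑ t, push f p t = ∑ s, p s := by
  unfold push
  rw [Finset.sum_comm]
  refine Finset.sum_congr rfl fun s _ => ?_
  simp

lemma event_bound {S : Type*} [Fintype S] (p q : S → ℝ)
    (hsum : ∑ s, p s = ∑ s, q s) (T : S → Prop) [DecidablePred T] :
    |∑ s, (if T s then p s - q s else 0)| ≤ statDist p q := by
  set A := ∑ s, (if T s then p s - q s else 0) with hA
  set B := ∑ s, (if T s then 0 else p s - q s) with hB
  have hAB : A + B = 0 := by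
    rw [hA, hB, ← Finset.sum_add_distrib]
    have : ∀ s : S, (if T s then p s - q s else 0) + (if T s then 0 else p s - q s)
        = p s - q s := by intro s; split_ifs <;> ring
    simp only [this, Finset.sum_sub_distrib, hsum, sub_self]
  have h1 : |A| ≤ ∑ s, (if T s then |p s - q s| else 0) := by
    refine (Finset.abs_sum_le_sum_abs _ _).trans (Finset.sum_le_sum fun s _ => ?_)
    split_ifs <;> simp
  have h2 : |B| ≤ ∑ s, (if T s then 0 else |p s - q s|) := by
    refine (Finset.abs_sum_le_sum_abs _ _).trans (Finset.sum_le_sum fun s _ => ?_)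
    split_ifs <;> simp
  have hBA : |B| = |A| := by rw [show B = -A by linarith, abs_neg]
  have : |A| + |A| ≤ ∑ s, |p s - q s| := by
    calc |A| + |A| = |A| + |B| := by rw [hBA]
    _ ≤ (∑ s, (if T s then |p s - q s| else 0)) + ∑ s, (if T s then 0 else |p s - q s|) :=
        add_le_add h1 h2
    _ = ∑ s, |p s - q s| := by
        rw [← Finset.sum_add_distrib]
        refine Finset.sum_congr rfl fun s _ => ?_
        split_ifs <;> ring
  unfold statDist; linarith

lemma statDist_triangle {S : Type*} [Fintype S] (p q r : S → ℝ) :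
    statDist p r ≤ statDist p q + statDist q r := by
  unfold statDist
  rw [← add_div, div_le_div_iff_of_pos_right (by norm_num : (0:ℝ) < 2)]
  rw [← Finset.sum_add_distrib]
  exact Finset.sum_le_sum fun s _ => by
    calc |p s - r s| = |(p s - q s) + (q s - r s)| := by ring_nf
    _ ≤ |p s - q s| + |q s - r s| := abs_add_le _ _

lemma statDist_mix {S I : Type*} [Fintype S] [Fintype I] (w : I → ℝ) (P Q : I → S → ℝ)
    (hw : ∀ i, 0 ≤ w i) (hwsum : ∑ i, w i = 1) (ε : ℝ)
    (hPQ : ∀ i, statDist (P i) (Q i) ≤ ε) :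
    statDist (fun t => ∑ i, w i * P i t) (fun t => ∑ i, w i * Q i t) ≤ ε := by
  unfold statDist
  rw [div_le_iff₀ (by norm_num : (0:ℝ) < 2)]
  calc ∑ t, |(∑ i, w i * P i t) - ∑ i, w i * Q i t|
      = ∑ t, |∑ i, w i * (P i t - Q i t)| := by
        refine Finset.sum_congr rfl fun t _ => ?_
        congr 1
        rw [← Finset.sum_sub_distrib]
        refine Finset.sum_congr rfl fun i _ => by ring
    _ ≤ ∑ t, ∑ i, |w i * (P i t - Q i t)| :=
        Finset.sum_le_sum fun t _ => Finset.abs_sum_le_sum_abs _ _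
    _ = ∑ i, w i * ∑ t, |P i t - Q i t| := by
        rw [Finset.sum_comm]
        refine Finset.sum_congr rfl fun i _ => ?_
        rw [Finset.mul_sum]
        refine Finset.sum_congr rfl fun t _ => ?_
        rw [abs_mul, abs_of_nonneg (hw i)]
    _ ≤ ∑ i, w i * (2 * ε) := by
        refine Finset.sum_le_sum fun i _ => mul_le_mul_of_nonneg_left ?_ (hw i)
        have := hPQ i
        unfold statDist at this
        linarith
    _ = ε * 2 := by rw [← Finset.sum_mul, hwsum]; ring

lemma push_push {S T U : Type*} [Fintype S] [Fintype T] [DecidableEq T] [DecidableEq U]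
    (ψ : S → T) (φ : T → U) (p : S → ℝ) :
    push φ (push ψ p) = push (fun s => φ (ψ s)) p := by
  funext t
  unfold push
  have : ∀ u : T, (if φ u = t then ∑ s, (if ψ s = u then p s else 0) else 0)
      = ∑ s, (if φ u = t then (if ψ s = u then p s else 0) else 0) := by
    intro u; split_ifs <;> simp
  simp only [this]
  rw [Finset.sum_comm]
  refine Finset.sum_congr rfl fun s _ => ?_
  rw [Finset.sum_eq_single (ψ s)]
  · simp
  · intro u _ hu
    split_ifs with h1 h2
    · exact absurd h2.symm hu
    · rfl
    · rfl
  · simp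

lemma statDist_push_le {S T : Type*} [Fintype S] [Fintype T] [DecidableEq T]
    (φ : S → T) (p q : S → ℝ) :
    statDist (push φ p) (push φ q) ≤ statDist p q := by
  unfold statDist push
  rw [div_le_div_iff_of_pos_right (by norm_num : (0:ℝ) < 2)]
  calc ∑ t, |(∑ s, if φ s = t then p s else 0) - ∑ s, if φ s = t then q s else 0|
      ≤ ∑ t, ∑ s, (if φ s = t then |p s - q s| else 0) := by
        refine Finset.sum_le_sum fun t _ => ?_
        rw [← Finset.sum_sub_distrib]
        refine (Finset.abs_sum_le_sum_abs _ _).trans (Finset.sum_le_sum fun s _ => ?_)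
        split_ifs <;> simp
    _ = ∑ s, |p s - q s| := by
        rw [Finset.sum_comm]
        refine Finset.sum_congr rfl fun s _ => ?_
        simp

lemma statDist_pair_le {A B Ω : Type*} [Fintype A] [Fintype B] [Fintype Ω]
    [DecidableEq A] [DecidableEq B]
    (F F' : Ω → A) (G G' : Ω → B) (p : Ω → ℝ) (ε : ℝ)
    (hleak : ∀ fb : A → Bool, ∀ gb : B → Bool,
      statDist (push (fun ω => (fb (F ω), gb (G ω))) p)
               (push (fun ω => (fb (F' ω), gb (G' ω))) p) ≤ ε) :
    statDist (push (fun ω => (F ω, G ω)) p) (push (fun ω => (F' ω, G' ω)) p)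
      ≤ (Fintype.card A : ℝ) * ε := by
  -- key sub-claim: for every u : A and boolean T : B → Bool, the difference of
  -- "F = u and T(G)" probabilities is at most ε
  have key : ∀ (u : A) (T : B → Bool),
      |(∑ ω, if F ω = u ∧ T (G ω) = true then p ω else 0)
        - ∑ ω, if F' ω = u ∧ T (G' ω) = true then p ω else 0| ≤ ε := by
    intro u T
    set fb : A → Bool := fun a => decide (a = u) with hfb
    have hle := hleak fb T
    have hsum : ∑ s, push (fun ω => (fb (F ω), T (G ω))) p s
        = ∑ s, push (fun ω => (fb (F' ω), T (G' ω))) p s := by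
      rw [push_sum, push_sum]
    have hev := event_bound _ _ hsum (fun s => s = (true, true))
    have e1 : ∑ s : Bool × Bool, (if s = (true, true)
          then push (fun ω => (fb (F ω), T (G ω))) p s
            - push (fun ω => (fb (F' ω), T (G' ω))) p s else 0)
        = push (fun ω => (fb (F ω), T (G ω))) p (true, true)
          - push (fun ω => (fb (F' ω), T (G' ω))) p (true, true) := by
      rw [Finset.sum_eq_single ((true, true) : Bool × Bool)]
      · simp
      · intro s _ hs; simp [hs]
      · simp
    rw [e1] at hev
    have e2 : push (fun ω => (fb (F ω), T (G ω))) p (true, true)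
        = ∑ ω, if F ω = u ∧ T (G ω) = true then p ω else 0 := by
      unfold push
      refine Finset.sum_congr rfl fun ω _ => ?_
      congr 1
      simp [hfb, Prod.ext_iff]
    have e3 : push (fun ω => (fb (F' ω), T (G' ω))) p (true, true)
        = ∑ ω, if F' ω = u ∧ T (G' ω) = true then p ω else 0 := by
      unfold push
      refine Finset.sum_congr rfl fun ω _ => ?_
      congr 1
      simp [hfb, Prod.ext_iff]
    rw [e2, e3] at hev
    exact hev.trans (le_trans hle le_rfl)
  -- now bound the statistical distance of the full pair
  set P := push (fun ω => (F ω, G ω)) p with hP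
  set Q := push (fun ω => (F' ω, G' ω)) p with hQ
  have expand : ∀ (u : A) (T : B → Bool),
      (∑ v, if T v = true then P (u, v) - Q (u, v) else 0)
      = (∑ ω, if F ω = u ∧ T (G ω) = true then p ω else 0)
        - ∑ ω, if F' ω = u ∧ T (G' ω) = true then p ω else 0 := by
    intro u T
    have e : ∀ (H : Ω → A) (K : Ω → B),
        (∑ v, if T v = true then push (fun ω => (H ω, K ω)) p (u, v) else 0)
        = ∑ ω, if H ω = u ∧ T (K ω) = true then p ω else 0 := by
      intro H K
      unfold push
      have : ∀ v : B, (if T v = true then ∑ ω, (if (H ω, K ω) = (u, v) then p ω else 0) else 0)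
          = ∑ ω, (if T v = true then (if (H ω, K ω) = (u, v) then p ω else 0) else 0) := by
        intro v; split_ifs <;> simp
      simp only [this]
      rw [Finset.sum_comm]
      refine Finset.sum_congr rfl fun ω _ => ?_
      rw [Finset.sum_eq_single (K ω)]
      · by_cases h1 : H ω = u <;> by_cases h2 : T (K ω) = true <;>
          simp [h1, h2, Prod.ext_iff]
      · intro v _ hv
        split_ifs with h1 h2
        · exact absurd (Prod.ext_iff.mp h2).2.symm hv
        · rfl
        · rfl
      · simp
    rw [hP, hQ]
    have := e F G
    have := e F' G'
    rw [show (∑ v, if T v = true then push (fun ω => (F ω, G ω)) p (u, v)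
        - push (fun ω => (F' ω, G' ω)) p (u, v) else 0)
      = (∑ v, if T v = true then push (fun ω => (F ω, G ω)) p (u, v) else 0)
        - ∑ v, if T v = true then push (fun ω => (F' ω, G' ω)) p (u, v) else 0 by
        rw [← Finset.sum_sub_distrib]
        refine Finset.sum_congr rfl fun v _ => ?_
        split_ifs <;> ring]
    rw [e F G, e F' G']
  -- per-u bound
  have peru : ∀ u : A, ∑ v, |P (u, v) - Q (u, v)| ≤ 2 * ε := by
    intro u
    set T : B → Bool := fun v => decide (0 ≤ P (u, v) - Q (u, v)) with hT
    have hsplit : ∑ v, |P (u, v) - Q (u, v)|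
        = (∑ v, if T v = true then P (u, v) - Q (u, v) else 0)
          - ∑ v, if T v = false then P (u, v) - Q (u, v) else 0 := by
      rw [← Finset.sum_sub_distrib]
      refine Finset.sum_congr rfl fun v _ => ?_
      have ht : (T v = true) ↔ 0 ≤ P (u, v) - Q (u, v) := by simp [hT]
      have ht' : (T v = false) ↔ ¬ 0 ≤ P (u, v) - Q (u, v) := by simp [hT]
      by_cases hv : 0 ≤ P (u, v) - Q (u, v)
      · rw [if_pos (ht.mpr hv), if_neg (fun hf => (ht'.mp hf) hv), abs_of_nonneg hv]; ring
      · rw [if_neg (fun htv => hv (ht.mp htv)), if_pos (ht'.mpr hv),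
          abs_of_neg (lt_of_not_ge hv)]; ring
    have h1 : |∑ v, if T v = true then P (u, v) - Q (u, v) else 0| ≤ ε := by
      rw [expand u T]; exact key u T
    have h2' : |∑ v, if T v = false then P (u, v) - Q (u, v) else 0| ≤ ε := by
      have hk := key u (fun v => ! T v)
      rw [← expand u (fun v => ! T v)] at hk
      simpa only [Bool.not_eq_true'] using hk
    rw [hsplit]
    have := abs_le.mp h1
    have := abs_le.mp h2'
    linarith [(abs_le.mp h1).1, (abs_le.mp h1).2, (abs_le.mp h2').1, (abs_le.mp h2').2]
  unfold statDist
  rw [div_le_iff₀ (by norm_num : (0:ℝ) < 2)]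
  calc ∑ s : A × B, |P s - Q s| = ∑ u : A, ∑ v : B, |P (u, v) - Q (u, v)| := by
        rw [Fintype.sum_prod_type]
    _ ≤ ∑ _u : A, 2 * ε := Finset.sum_le_sum fun u _ => peru u
    _ = (Fintype.card A : ℝ) * ε * 2 := by
        rw [Finset.sum_const]
        simp [Finset.card_univ]
        ring

/-- If `h(f(Z₁), g(Z₂))` is `δ'`-close to uniform for every distribution
`(Z₁,Z₂) = Sh(U_b, y)` with `y ∈ {0,1}^d`, then `ext(y) = h(f(L_y), g(R_y))` with
`(L_y,R_y) = Sh(0^b, y)` extracts from every source in `𝒴` with error `2^b·ε₂ + δ'`. -/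
theorem extractor_from_modified_distributions
    (b d ℓ m : ℕ) (ε₁ ε₂ δ' : ℝ) (Sh : BS b → BS d → BS ℓ × BS ℓ)
    (Rec : BS ℓ × BS ℓ → BS b) (𝒴 : Set (BS d → ℝ))
    (hscheme : IsLRSS b d ℓ Sh Rec 𝒴 ε₁ ε₂)
    (f g : BS ℓ → BS b) (h : BS (2 * b) → BS m)
    (hmod : ∀ y : BS d,
      statDist (push (fun x => h (concat (f (Sh x y).1) (g (Sh x y).2))) (unif b))
        (unif m) ≤ δ') :
    ∀ Y ∈ 𝒴,
      statDist
        (push (fun y => h (concat (f (Sh (fun _ => false) y).1)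
          (g (Sh (fun _ => false) y).2))) Y)
        (unif m) ≤ (2:ℝ) ^ b * ε₂ + δ' := by
  intro Y hY
  obtain ⟨hdist, -, -, hleak⟩ := hscheme
  obtain ⟨hYnn, hYsum⟩ := hdist Y hY
  set x₀ : BS b := fun _ => false with hx₀
  have hcardn : Fintype.card (BS b) = 2 ^ b := by simp [BS]
  have hcard : (Fintype.card (BS b) : ℝ) = (2:ℝ) ^ b := by
    rw [hcardn]; push_cast; ring
  set P : BS b → BS m → ℝ :=
    fun x => push (fun y => h (concat (f (Sh x y).1) (g (Sh x y).2))) Y with hPdef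
  -- Step 1: distance from P x₀ to each P x is at most 2^b · ε₂
  have step1 : ∀ x, statDist (P x₀) (P x) ≤ (2:ℝ) ^ b * ε₂ := by
    intro x
    have hpp : ∀ x', P x' = push (fun uv : BS b × BS b => h (concat uv.1 uv.2))
        (push (fun y => (f (Sh x' y).1, g (Sh x' y).2)) Y) := by
      intro x'
      rw [hPdef, push_push]
    rw [hpp x₀, hpp x, ← hcard]
    refine le_trans (statDist_push_le _ _ _) ?_
    exact statDist_pair_le _ _ _ _ Y ε₂
      (fun fb gb => hleak Y hY x₀ x (fun s => fb (f s)) (fun s => gb (g s)))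
  -- the mixture over a uniform secret
  set M : BS m → ℝ := fun t => ∑ x, ((2:ℝ) ^ b)⁻¹ * P x t with hM
  have hwsum : ∑ _x : BS b, ((2:ℝ) ^ b)⁻¹ = 1 := by
    rw [Finset.sum_const, Finset.card_univ, nsmul_eq_mul, hcard]
    field_simp
  have claimA : statDist (P x₀) M ≤ (2:ℝ) ^ b * ε₂ := by
    have hPx0 : P x₀ = fun t => ∑ _x : BS b, ((2:ℝ) ^ b)⁻¹ * P x₀ t := by
      funext t
      rw [← Finset.sum_mul, hwsum, one_mul]
    calc statDist (P x₀) M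
        = statDist (fun t => ∑ _x : BS b, ((2:ℝ) ^ b)⁻¹ * P x₀ t) M := by rw [← hPx0]
      _ ≤ (2:ℝ) ^ b * ε₂ :=
          statDist_mix (fun _ => ((2:ℝ) ^ b)⁻¹) (fun _ => P x₀) P
            (fun _ => by positivity) hwsum _ step1
  have claimB : statDist M (unif m) ≤ δ' := by
    have hMalt : M = fun t => ∑ y, Y y *
        push (fun x => h (concat (f (Sh x y).1) (g (Sh x y).2))) (unif b) t := by
      funext t
      simp only [hM, hPdef]
      unfold push
      simp only [Finset.mul_sum]
      rw [Finset.sum_comm]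
      refine Finset.sum_congr rfl fun y _ => ?_
      refine Finset.sum_congr rfl fun x _ => ?_
      show ((2:ℝ) ^ b)⁻¹ * _ = Y y * _
      unfold unif
      split_ifs <;> ring
    have hU : unif m = fun t => ∑ y, Y y * unif m t := by
      funext t
      rw [← Finset.sum_mul, hYsum, one_mul]
    calc statDist M (unif m)
        = statDist (fun t => ∑ y, Y y *
              push (fun x => h (concat (f (Sh x y).1) (g (Sh x y).2))) (unif b) t)
            (fun t => ∑ y, Y y * unif m t) := by rw [← hMalt, ← hU]
      _ ≤ δ' := statDist_mix Y _ _ hYnn hYsum δ' hmod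
  calc statDist (P x₀) (unif m)
      ≤ statDist (P x₀) M + statDist M (unif m) := statDist_triangle _ _ _
    _ ≤ (2:ℝ) ^ b * ε₂ + δ' := add_le_add claimA claimB
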